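/- Under the assumptions of the rounding construction (constant-speed path $\xi$ of length $L$, curvature constant $\bar\sigma$, $(h,l)$-dense graph, $n = \lceil L/l \rceil$ pieces), the derivative of the rounded polygonal path satisfies, for almost every $\tau$, $\|(\xi_R - \xi)_\tau(\tau)\| \le \frac{\sqrt{2}\,\bar\sigma l}{L} + 2h\left(\frac{L}{l} + 1\right)$. -/

import Mathlib

open MeasureTheory Set intervalIntegral

set_option maxHeartbeats 1000000 in
theorem rounded_path_derivative_error
    (Ω : Set (EuclideanSpace ℝ (Fin 2))) (hΩ : Convex ℝ Ω)
    (V : Set (EuclideanSpace ℝ (Fin 2)))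
    (E : EuclideanSpace ℝ (Fin 2) → EuclideanSpace ℝ (Fin 2) → Prop)
    (h l : ℝ) (hh : 0 ≤ h) (hl : 0 < l)
    (containment : V ⊆ Ω)
    (density : ∀ p ∈ Ω, ∃ v ∈ V, ‖p - v‖ ≤ h)
    (connectivity : ∀ v ∈ V, ∀ u ∈ V, ‖v - u‖ ≤ l + 2 * h → E v u)
    (ξ ξ' : ℝ → EuclideanSpace ℝ (Fin 2)) (L σ : ℝ) (hL : 0 < L)
    (hrange : ∀ τ ∈ Set.Icc (0:ℝ) 1, ξ τ ∈ Ω)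
    (hd : ∀ τ ∈ Set.Icc (0:ℝ) 1, HasDerivAt ξ (ξ' τ) τ)
    (hspeed : ∀ τ ∈ Set.Icc (0:ℝ) 1, ‖ξ' τ‖ = L)
    (hlip : ∀ a ∈ Set.Icc (0:ℝ) 1, ∀ b ∈ Set.Icc (0:ℝ) 1,
      ‖ξ' a - ξ' b‖ ≤ σ * |a - b|)
    (n : ℕ) (hn : n = ⌈L / l⌉₊)
    (v : ℕ → EuclideanSpace ℝ (Fin 2))
    (hv : ∀ i ≤ n, v i ∈ V ∧ ‖v i - ξ ((i : ℝ) / n)‖ ≤ h)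
    (ξR : ℝ → EuclideanSpace ℝ (Fin 2))
    (hR : ∀ τ : ℝ, ξR τ =
      v (⌊(n : ℝ) * τ⌋).toNat +
        ((n : ℝ) * τ - (⌊(n : ℝ) * τ⌋ : ℝ)) •
          (v (⌈(n : ℝ) * τ⌉).toNat - v (⌊(n : ℝ) * τ⌋).toNat)) :
    ∀ᵐ τ ∂(MeasureTheory.volume.restrict (Set.Icc (0:ℝ) 1)),
      ∃ dR : EuclideanSpace ℝ (Fin 2), HasDerivAt ξR dR τ ∧
        ‖dR - ξ' τ‖ ≤ Real.sqrt 2 * σ * l / L + 2 * h * (L / l + 1) := by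
  have hn0 : 0 < n := by
    rw [hn]; exact Nat.ceil_pos.mpr (div_pos hL hl)
  have hnR : (0:ℝ) < n := by exact_mod_cast hn0
  have hlb : L / l ≤ (n:ℝ) := hn ▸ Nat.le_ceil _
  have hub : (n:ℝ) ≤ L / l + 1 := by
    rw [hn]; exact le_of_lt (Nat.ceil_lt_add_one (le_of_lt (div_pos hL hl)))
  have hσ : 0 ≤ σ := by
    have h01 := hlip 0 (by norm_num) 1 (by norm_num)
    have h2 : ‖ξ' 0 - ξ' 1‖ ≤ σ := by simpa using h01
    exact le_trans (norm_nonneg _) h2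
  have hcont : ContinuousOn ξ' (Icc (0:ℝ) 1) := by
    refine (LipschitzOnWith.of_dist_le_mul (K := Real.toNNReal σ) ?_).continuousOn
    intro x hx y hy
    have := hlip x hx y hy
    simpa [dist_eq_norm, Real.coe_toNNReal σ hσ, Real.dist_eq] using this
  -- reduce to a.e. points of Ioo 0 1 where n*τ is not an integer
  rw [← MeasureTheory.Measure.restrict_congr_set MeasureTheory.Ioo_ae_eq_Icc]
  have hS : ∀ᵐ τ ∂(volume : Measure ℝ), ¬ ∃ k : ℤ, (n:ℝ) * τ = k := by
    have hc : Set.Countable {τ : ℝ | ∃ k : ℤ, (n:ℝ) * τ = k} := by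
      apply Set.Countable.mono _ (Set.countable_range (fun k : ℤ => (k:ℝ) / n))
      rintro τ ⟨k, hk⟩
      exact ⟨k, by field_simp [← hk]; exact hk.symm⟩
    have h0 := hc.measure_zero (volume : Measure ℝ)
    rw [MeasureTheory.ae_iff]
    simpa using h0
  filter_upwards [MeasureTheory.ae_restrict_mem measurableSet_Ioo,
    MeasureTheory.ae_restrict_of_ae hS] with τ hτ hτint
  -- basic facts about the floor
  set x : ℝ := (n:ℝ) * τ with hxdef
  set m : ℤ := ⌊x⌋ with hmdef
  have hx0 : 0 < x := mul_pos hnR hτ.1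
  have hx1 : x < n := by
    have := hτ.2
    nlinarith
  have hm0 : 0 ≤ m := Int.floor_nonneg.mpr hx0.le
  have hmlt : (m:ℝ) < x := by
    refine lt_of_le_of_ne (Int.floor_le x) ?_
    intro hcontra
    exact hτint ⟨m, hcontra.symm⟩
  have hxlt : x < (m:ℝ) + 1 := Int.lt_floor_add_one x
  have hmn : m + 1 ≤ (n:ℤ) := by
    have : m < (n:ℤ) := Int.floor_lt.mpr (by exact_mod_cast hx1)
    omega
  set i : ℕ := m.toNat with hidef
  have hiR : (i:ℝ) = (m:ℝ) := by
    rw [hidef]; exact_mod_cast congrArg Int.cast (Int.toNat_of_nonneg hm0)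
  have hin : i + 1 ≤ n := by omega
  have hi1 : (m + 1).toNat = i + 1 := by omega
  set a : ℝ := (i:ℝ) / n with hadef
  set b : ℝ := ((i:ℝ) + 1) / n with hbdef
  have hab : a ≤ b := by
    rw [hadef, hbdef]
    gcongr
    linarith
  have hba : b - a = 1 / n := by
    rw [hadef, hbdef]; field_simp; ring
  have hIcc : Icc a b ⊆ Icc (0:ℝ) 1 := by
    intro s hs
    constructor
    · have ha0 : 0 ≤ a := div_nonneg (by positivity) hnR.le
      linarith [hs.1]
    · have hb1 : b ≤ 1 := by
        rw [hbdef, div_le_one hnR]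
        have : ((i:ℝ) + 1) ≤ (n:ℝ) := by exact_mod_cast hin
        linarith
      linarith [hs.2]
  have hτab : τ ∈ Icc a b := by
    constructor
    · rw [hadef, div_le_iff₀ hnR, hiR]
      nlinarith [hmlt]
    · rw [hbdef, le_div_iff₀ hnR, hiR]
      nlinarith [hxlt]
  -- derivative of ξR at τ
  set w : EuclideanSpace ℝ (Fin 2) := v (i+1) - v i with hwdef
  have hev : ξR =ᶠ[nhds τ] (fun s => v i + ((n:ℝ) * s - (m:ℝ)) • w) := by
    have hU : IsOpen {s : ℝ | (m:ℝ) < (n:ℝ) * s ∧ (n:ℝ) * s < (m:ℝ) + 1} := by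
      apply IsOpen.inter
      · exact isOpen_lt continuous_const (continuous_const.mul continuous_id)
      · exact isOpen_lt (continuous_const.mul continuous_id) continuous_const
    have hτU : τ ∈ {s : ℝ | (m:ℝ) < (n:ℝ) * s ∧ (n:ℝ) * s < (m:ℝ) + 1} := ⟨hmlt, hxlt⟩
    filter_upwards [hU.mem_nhds hτU] with s hs
    have hfl : ⌊(n:ℝ) * s⌋ = m := by
      rw [Int.floor_eq_iff]
      · exact ⟨hs.1.le, by exact_mod_cast hs.2⟩
    have hcl : ⌈(n:ℝ) * s⌉ = m + 1 := by
      rw [Int.ceil_eq_iff]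
      · constructor
        · push_cast; linarith [hs.1]
        · push_cast; linarith [hs.2]
    rw [hR s, hfl, hcl, hi1]
  have hderiv : HasDerivAt ξR ((n:ℝ) • w) τ := by
    have h1 : HasDerivAt (fun s : ℝ => (n:ℝ) * s - (m:ℝ)) (n:ℝ) τ := by
      simpa using ((hasDerivAt_id τ).const_mul (n:ℝ)).sub_const (m:ℝ)
    exact ((h1.smul_const w).const_add (v i)).congr_of_eventuallyEq hev
  refine ⟨(n:ℝ) • w, hderiv, ?_⟩
  -- the integral estimate
  have hInt : IntervalIntegrable ξ' volume a b :=
    (hcont.mono (by rw [uIcc_of_le hab]; exact hIcc)).intervalIntegrable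
  have hFTC : ∫ s in a..b, ξ' s = ξ b - ξ a := by
    apply intervalIntegral.integral_eq_sub_of_hasDerivAt
    · intro s hs
      rw [uIcc_of_le hab] at hs
      exact hd s (hIcc hs)
    · exact hInt
  have key : ‖(n:ℝ) • (ξ b - ξ a) - ξ' τ‖ ≤ σ / n := by
    have hdiff : (∫ s in a..b, (ξ' s - ξ' τ)) = (ξ b - ξ a) - (b - a) • ξ' τ := by
      rw [intervalIntegral.integral_sub hInt intervalIntegrable_const, hFTC,
        intervalIntegral.integral_const]
    have hbound : ‖∫ s in a..b, (ξ' s - ξ' τ)‖ ≤ (σ / n) * |b - a| := by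
      apply intervalIntegral.norm_integral_le_of_norm_le_const
      intro s hs
      rw [uIoc_of_le hab] at hs
      have hs' : s ∈ Icc a b := ⟨hs.1.le, hs.2⟩
      have h1 := hlip s (hIcc hs') τ (hIcc hτab)
      have h2 : |s - τ| ≤ 1 / n := by
        rw [abs_sub_le_iff]
        constructor <;> [skip; skip] <;>
          (first | linarith [hs'.1, hs'.2, hτab.1, hτab.2, hba])
      calc ‖ξ' s - ξ' τ‖ ≤ σ * |s - τ| := h1
        _ ≤ σ * (1 / n) := by
            apply mul_le_mul_of_nonneg_left h2 hσ
        _ = σ / n := by ring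
    have heq : (n:ℝ) • ((ξ b - ξ a) - (b - a) • ξ' τ) = (n:ℝ) • (ξ b - ξ a) - ξ' τ := by
      rw [hba, smul_sub, smul_smul]
      congr 1
      rw [show (n:ℝ) * (1 / n) = 1 by field_simp, one_smul]
    calc ‖(n:ℝ) • (ξ b - ξ a) - ξ' τ‖
        = (n:ℝ) * ‖(ξ b - ξ a) - (b - a) • ξ' τ‖ := by
          rw [← heq, norm_smul, Real.norm_eq_abs, abs_of_pos hnR]
      _ ≤ (n:ℝ) * ((σ / n) * |b - a|) := by
          apply mul_le_mul_of_nonneg_left _ hnR.le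
          rw [← hdiff]; exact hbound
      _ = σ / n := by
          rw [hba, abs_of_pos (by positivity : (0:ℝ) < 1 / n)]
          field_simp
  -- rounding error bounds
  have hv1 : ‖v (i+1) - ξ b‖ ≤ h := by
    have := (hv (i+1) hin).2
    have hcast : ((i+1 : ℕ) : ℝ) / n = b := by push_cast [hbdef]; ring
    rwa [hcast] at this
  have hv0 : ‖v i - ξ a‖ ≤ h := (hv i (by omega)).2
  -- triangle inequality
  have hdecomp : (n:ℝ) • w - ξ' τ =
      (n:ℝ) • (v (i+1) - ξ b) + (n:ℝ) • (ξ a - v i) + ((n:ℝ) • (ξ b - ξ a) - ξ' τ) := by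
    rw [hwdef]; module
  have htri : ‖(n:ℝ) • w - ξ' τ‖ ≤ (n:ℝ) * h + (n:ℝ) * h + σ / n := by
    rw [hdecomp]
    refine le_trans (norm_add₃_le) (add_le_add (add_le_add ?_ ?_) key)
    · rw [norm_smul, Real.norm_eq_abs, abs_of_pos hnR]
      exact mul_le_mul_of_nonneg_left hv1 hnR.le
    · rw [norm_smul, Real.norm_eq_abs, abs_of_pos hnR]
      have : ‖ξ a - v i‖ ≤ h := by rwa [norm_sub_rev]
      exact mul_le_mul_of_nonneg_left this hnR.le
  -- final arithmetic
  have hsqrt : (1:ℝ) ≤ Real.sqrt 2 := by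
    rw [show (1:ℝ) = Real.sqrt 1 by simp]
    exact Real.sqrt_le_sqrt (by norm_num)
  have hnh : (n:ℝ) * h ≤ h * (L / l + 1) :=
    (mul_le_mul_of_nonneg_right hub hh).trans_eq (mul_comm _ _)
  have hσn : σ / n ≤ Real.sqrt 2 * σ * l / L := by
    have h1 : σ / n ≤ σ / (L / l) :=
      div_le_div_of_nonneg_left hσ (div_pos hL hl) hlb
    have h2 : σ / (L / l) = σ * l / L := by field_simp
    have h3 : σ * l / L ≤ Real.sqrt 2 * σ * l / L := by
      refine (div_le_div_iff_of_pos_right hL).mpr ?_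
      nlinarith [mul_nonneg hσ hl.le]
    linarith
  calc ‖(n:ℝ) • w - ξ' τ‖ ≤ (n:ℝ) * h + (n:ℝ) * h + σ / n := htri
    _ ≤ h * (L / l + 1) + h * (L / l + 1) + Real.sqrt 2 * σ * l / L := by
        linarith [hnh, hσn]
    _ = Real.sqrt 2 * σ * l / L + 2 * h * (L / l + 1) := by ring
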